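/- Let n, W, M be positive integers and let \Delta(\alpha) = \sum_{k=0}^{2n-1} c_k \alpha^k be a nonzero polynomial with integer coefficients satisfying |c_k| \leq 2 n W M^{2n-1} \binom{2n-1}{k} for all k. Then \Delta has no real root in the open interval (1 - 2^{\lfloor 2n/3 \rfloor - 2}/(n W (2M)^{2n-1} \binom{2n-1}{\lfloor 2n/3 \rfloor}), \, 1). -/

import Mathlib

open Polynomial Finset


lemma coeff_one_sub_X_pow (k i : ℕ) :
    ((1 - X : Polynomial ℤ) ^ k).coeff i = (-1) ^ i * (k.choose i : ℤ) := by
  have h : (1 - X : Polynomial ℤ) ^ k = ∑ m ∈ range (k+1),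
      C ((-1)^m * (k.choose m : ℤ)) * X ^ m := by
    rw [sub_eq_add_neg, add_comm, add_pow]
    refine Finset.sum_congr rfl fun m hm => ?_
    rw [neg_pow]
    simp only [one_pow, mul_one, map_mul, map_pow, map_neg, map_one, map_natCast]
    ring
  rw [h, finset_sum_coeff]
  simp only [coeff_C_mul, coeff_X_pow, mul_ite, mul_one, mul_zero]
  rw [Finset.sum_ite_eq (range (k+1)) i]
  by_cases hik : i ∈ range (k+1)
  · rw [if_pos hik]
  · rw [if_neg hik]
    rw [Finset.mem_range, not_lt] at hik
    rw [Nat.choose_eq_zero_of_lt hik]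
    simp

lemma aux_sum_choose (N i : ℕ) (h : i ≤ N) :
    ∑ k ∈ range (N+1), N.choose k * k.choose i = N.choose i * 2^(N-i) := by
  rw [range_eq_Ico, ← Finset.sum_Ico_consecutive _ (Nat.zero_le i) (by omega : i ≤ N+1)]
  have h1 : ∑ k ∈ Finset.Ico 0 i, N.choose k * k.choose i = 0 := by
    apply Finset.sum_eq_zero
    intro k hk
    rw [Finset.mem_Ico] at hk
    rw [Nat.choose_eq_zero_of_lt hk.2, mul_zero]
  rw [h1, zero_add, Finset.sum_Ico_eq_sum_range]
  have h2 : ∀ r ∈ range (N + 1 - i), N.choose (i + r) * (i + r).choose i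
      = N.choose i * (N - i).choose r := by
    intro r hr
    rw [Finset.mem_range] at hr
    rw [Nat.choose_mul (by omega : i ≤ i + r), Nat.add_sub_cancel_left]
  rw [Finset.sum_congr rfl h2, ← Finset.mul_sum]
  have h3 : N + 1 - i = (N - i) + 1 := by omega
  rw [h3, Nat.sum_range_choose]
open Finset

lemma aux_g_le (n : ℕ) (hn : 0 < n) (i : ℕ) :
    (2*n-1).choose i * 2^(2*n-1-i) ≤ (2*n-1).choose (2*n/3) * 2^(2*n-1-(2*n/3)) := by
  set N := 2*n-1 with hN
  set m := 2*n/3 with hm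
  set g : ℕ → ℕ := fun i => N.choose i * 2^(N-i) with hg
  have hmN : m ≤ N := by omega
  -- up step
  have up : ∀ i, i + 1 ≤ m → g i ≤ g (i+1) := by
    intro i hi
    have hiN : i + 1 ≤ N := le_trans hi hmN
    have key : 2 * N.choose i ≤ N.choose (i+1) := by
      have h1 : N.choose (i+1) * (i+1) = N.choose i * (N - i) := Nat.choose_succ_right_eq N i
      have h2 : 2 * (i+1) ≤ N - i := by omega
      have h3 : 2 * N.choose i * (i+1) ≤ N.choose (i+1) * (i+1) := by
        rw [h1]
        calc 2 * N.choose i * (i+1) = N.choose i * (2 * (i+1)) := by ring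
          _ ≤ N.choose i * (N - i) := Nat.mul_le_mul_left _ h2
      exact Nat.le_of_mul_le_mul_right h3 (by omega)
    have hsub : N - i = (N - (i+1)) + 1 := by omega
    calc g i = N.choose i * 2^(N-i) := rfl
      _ = 2 * N.choose i * 2^(N-(i+1)) := by rw [hsub, pow_succ]; ring
      _ ≤ N.choose (i+1) * 2^(N-(i+1)) := Nat.mul_le_mul_right _ key
  -- down step
  have down : ∀ i, m ≤ i → g (i+1) ≤ g i := by
    intro i hi
    by_cases hiN : i + 1 ≤ N
    · have key : N.choose (i+1) ≤ 2 * N.choose i := by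
        have h1 : N.choose (i+1) * (i+1) = N.choose i * (N - i) := Nat.choose_succ_right_eq N i
        have h2 : N - i ≤ 2 * (i+1) := by omega
        have h3 : N.choose (i+1) * (i+1) ≤ 2 * N.choose i * (i+1) := by
          rw [h1]
          calc N.choose i * (N - i) ≤ N.choose i * (2 * (i+1)) := Nat.mul_le_mul_left _ h2
            _ = 2 * N.choose i * (i+1) := by ring
        exact Nat.le_of_mul_le_mul_right h3 (by omega)
      have hsub : N - i = (N - (i+1)) + 1 := by omega
      calc g (i+1) = N.choose (i+1) * 2^(N-(i+1)) := rfl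
        _ ≤ 2 * N.choose i * 2^(N-(i+1)) := Nat.mul_le_mul_right _ key
        _ = N.choose i * 2^(N-i) := by rw [hsub, pow_succ]; ring
    · have : N.choose (i+1) = 0 := Nat.choose_eq_zero_of_lt (by omega)
      simp [hg, this]
  -- combine
  rcases le_or_gt i m with h | h
  · have key : ∀ d, g (m - d) ≤ g m := by
      intro d
      induction d with
      | zero => simp
      | succ d ih =>
        rcases le_or_gt (d+1) m with hd | hd
        · have : (m - (d+1)) + 1 = m - d := by omega
          have h4 : g (m - (d+1)) ≤ g (m - d) := by
            rw [← this]; exact up _ (by omega)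
          exact le_trans h4 ih
        · have : m - (d+1) = m - d := by omega
          rw [this]; exact ih
    have := key (m - i)
    rwa [Nat.sub_sub_self h] at this
  · have key : ∀ d, g (m + d) ≤ g m := by
      intro d
      induction d with
      | zero => simp
      | succ d ih => exact le_trans (down (m+d) (by omega)) ih
    have := key (i - m)
    rwa [Nat.add_sub_cancel' (le_of_lt h)] at this

set_option maxHeartbeats 1000000

/-- Let `n, W, M` be positive integers and `Δ = ∑_{k=0}^{2n-1} c_k α^k` a
nonzero integer polynomial with `|c_k| ≤ 2 n W M^(2n-1) binom(2n-1, k)` for all `k`. Then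
`Δ` has no real root in the open interval
`(1 - 2^(⌊2n/3⌋-2)/(n W (2M)^(2n-1) binom(2n-1, ⌊2n/3⌋)), 1)`. -/
theorem stmt_18 (n W M : ℕ) (hn : 0 < n) (hW : 0 < W) (hM : 0 < M)
    (Δ : Polynomial ℤ) (hΔ : Δ ≠ 0) (hdeg : Δ.natDegree ≤ 2 * n - 1)
    (hcoeff : ∀ k, |Δ.coeff k| ≤ 2 * (n : ℤ) * (W : ℤ) * (M : ℤ) ^ (2 * n - 1) *
      ((2 * n - 1).choose k : ℤ)) :
    ∀ x : ℝ,
      1 - (2 : ℝ) ^ (((2 * n / 3 : ℕ) : ℤ) - 2) /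
          ((n : ℝ) * (W : ℝ) * (2 * (M : ℝ)) ^ (2 * n - 1) *
            ((2 * n - 1).choose (2 * n / 3) : ℝ)) < x →
      x < 1 → Polynomial.aeval x Δ ≠ 0 := by
  intro x hx1 hx2
  set N := 2 * n - 1 with hNdef
  set m := 2 * n / 3 with hmdef
  have hmN : m ≤ N := by omega
  have hch : 0 < N.choose m := Nat.choose_pos hmN
  -- the transformed polynomial
  set P : Polynomial ℤ := Δ.comp (1 - Polynomial.X) with hPdef
  have hcompX : ((1 - Polynomial.X : Polynomial ℤ)).comp (1 - Polynomial.X) = Polynomial.X := by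
    simp [Polynomial.sub_comp]
  have hcomp : P.comp (1 - Polynomial.X) = Δ := by
    rw [hPdef, Polynomial.comp_assoc, hcompX, Polynomial.comp_X]
  have hP0 : P ≠ 0 := by
    intro h
    apply hΔ
    rw [← hcomp, h, Polynomial.zero_comp]
  have hdeg1X : (1 - Polynomial.X : Polynomial ℤ).natDegree = 1 := by
    have h : (1 - Polynomial.X : Polynomial ℤ) = -(Polynomial.X - Polynomial.C 1) := by
      rw [map_one]; ring
    rw [h, Polynomial.natDegree_neg, Polynomial.natDegree_X_sub_C]
  have hdegP : P.natDegree ≤ N := by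
    rw [hPdef, Polynomial.natDegree_comp, hdeg1X, mul_one]; exact hdeg
  set D := P.natDegree with hDdef
  set j := P.natTrailingDegree with hjdef
  have hjD : j ≤ D := Polynomial.natTrailingDegree_le_natDegree P
  have hdj : P.coeff j ≠ 0 := Polynomial.coeff_natTrailingDegree_ne_zero.mpr hP0
  -- integer coefficient bound
  set Cz : ℤ := 2 * (n : ℤ) * (W : ℤ) * (M : ℤ) ^ N with hCzdef
  have hCzpos : 0 < Cz := by positivity
  set Bz : ℤ := Cz * ((N.choose m * 2 ^ (N - m) : ℕ) : ℤ) with hBzdef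
  have hBzpos : 0 < Bz := by
    apply mul_pos hCzpos
    have : 0 < N.choose m * 2 ^ (N - m) := by positivity
    exact_mod_cast this
  have hBd : ∀ i, i ≤ N → |P.coeff i| ≤ Bz := by
    intro i hi
    have hΔsum : Δ = ∑ k ∈ range (N + 1), Polynomial.monomial k (Δ.coeff k) :=
      Δ.as_sum_range' (N + 1) (by omega)
    have hPsum : P = ∑ k ∈ range (N + 1),
        Polynomial.C (Δ.coeff k) * (1 - Polynomial.X) ^ k := by
      rw [hPdef]
      conv_lhs => rw [hΔsum]
      rw [Polynomial.sum_comp]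
      exact Finset.sum_congr rfl fun k _ => Polynomial.monomial_comp k
    rw [hPsum, Polynomial.finset_sum_coeff]
    simp only [Polynomial.coeff_C_mul, coeff_one_sub_X_pow]
    calc |∑ k ∈ range (N + 1), Δ.coeff k * ((-1) ^ i * (k.choose i : ℤ))|
        ≤ ∑ k ∈ range (N + 1), |Δ.coeff k * ((-1) ^ i * (k.choose i : ℤ))| :=
          Finset.abs_sum_le_sum_abs _ _
      _ = ∑ k ∈ range (N + 1), |Δ.coeff k| * (k.choose i : ℤ) := by
          refine Finset.sum_congr rfl fun k _ => ?_
          rw [abs_mul, abs_mul, abs_pow, abs_neg, abs_one, one_pow, one_mul,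
            Int.abs_natCast]
      _ ≤ ∑ k ∈ range (N + 1), Cz * (N.choose k : ℤ) * (k.choose i : ℤ) := by
          refine Finset.sum_le_sum fun k _ => ?_
          exact mul_le_mul_of_nonneg_right (hcoeff k) (Int.natCast_nonneg _)
      _ = Cz * ((∑ k ∈ range (N + 1), N.choose k * k.choose i : ℕ) : ℤ) := by
          push_cast
          rw [Finset.mul_sum]
          exact Finset.sum_congr rfl fun k _ => by ring
      _ = Cz * ((N.choose i * 2 ^ (N - i) : ℕ) : ℤ) := by rw [aux_sum_choose N i hi]
      _ ≤ Bz := by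
          rw [hBzdef]
          have hg : N.choose i * 2 ^ (N - i) ≤ N.choose m * 2 ^ (N - m) := aux_g_le n hn i
          exact mul_le_mul_of_nonneg_left (by exact_mod_cast hg) hCzpos.le
  -- coefficients bounded via unimodality at i as well
  have hBd' : ∀ i, i ≤ N → |P.coeff i| ≤ Bz := hBd
  -- real setup
  set t : ℝ := 1 - x with htdef
  have ht0 : 0 < t := by simp [htdef]; linarith
  set ε : ℝ := (2 : ℝ) ^ (((m : ℕ) : ℤ) - 2) /
      ((n : ℝ) * (W : ℝ) * (2 * (M : ℝ)) ^ N * ((N.choose m : ℕ) : ℝ)) with hεdef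
  have htε : t < ε := by
    have : 1 - ε < x := hx1
    simp only [htdef]
    linarith
  set Dd : ℝ := (n : ℝ) * (W : ℝ) * 2 ^ N * (M : ℝ) ^ N * ((N.choose m : ℕ) : ℝ) with hDddef
  have hDdpos : 0 < Dd := by
    rw [hDddef]; positivity
  have hε_eq : ε = (2 : ℝ) ^ m / (4 * Dd) := by
    rw [hεdef, hDddef]
    have h2 : (2 : ℝ) ^ (((m : ℕ) : ℤ) - 2) = (2 : ℝ) ^ m / 4 := by
      rw [zpow_sub₀ (by norm_num : (2:ℝ) ≠ 0), zpow_natCast]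
      norm_num
    rw [h2, mul_pow]
    ring
  have hεpos : 0 < ε := by
    rw [hε_eq]; positivity
  -- ε ≤ 1/2
  have hεhalf : ε ≤ 1 / 2 := by
    rw [hε_eq]
    have h1 : (2 : ℝ) ^ m ≤ 2 ^ N := pow_le_pow_right₀ (by norm_num) hmN
    have hn1 : (1 : ℝ) ≤ (n : ℝ) := by exact Nat.one_le_cast.mpr hn
    have hW1 : (1 : ℝ) ≤ (W : ℝ) := by exact Nat.one_le_cast.mpr hW
    have hM1 : (1 : ℝ) ≤ (M : ℝ) ^ N := one_le_pow₀ (by exact_mod_cast hM)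
    have hch1 : (1 : ℝ) ≤ ((N.choose m : ℕ) : ℝ) := by exact_mod_cast hch
    have h2 : (4 : ℝ) * 2 ^ N ≤ 4 * Dd := by
      rw [hDddef]
      have h2N : (0 : ℝ) < 2 ^ N := by positivity
      have a3 : (1 : ℝ) ≤ (n : ℝ) * (W : ℝ) * (M : ℝ) ^ N * ((N.choose m : ℕ) : ℝ) := by
        simpa using mul_le_mul (mul_le_mul (mul_le_mul hn1 hW1 zero_le_one (by linarith))
          hM1 zero_le_one (by positivity)) hch1 zero_le_one (by positivity)
      have hd : (2 : ℝ) ^ N ≤ (n : ℝ) * (W : ℝ) * 2 ^ N * (M : ℝ) ^ N *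
          ((N.choose m : ℕ) : ℝ) := by
        have h5 : (1 : ℝ) * 2 ^ N ≤ ((n : ℝ) * (W : ℝ) * (M : ℝ) ^ N *
            ((N.choose m : ℕ) : ℝ)) * 2 ^ N := mul_le_mul_of_nonneg_right a3 h2N.le
        calc (2 : ℝ) ^ N = 1 * 2 ^ N := (one_mul _).symm
          _ ≤ ((n : ℝ) * (W : ℝ) * (M : ℝ) ^ N * ((N.choose m : ℕ) : ℝ)) * 2 ^ N := h5
          _ = (n : ℝ) * (W : ℝ) * 2 ^ N * (M : ℝ) ^ N * ((N.choose m : ℕ) : ℝ) := by ring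
      linarith
    calc (2 : ℝ) ^ m / (4 * Dd) ≤ 2 ^ N / (4 * 2 ^ N) := by
          apply div_le_div₀ (by positivity) h1 (by positivity) h2
      _ = 1 / 4 := by
          rw [div_eq_div_iff (by positivity) (by norm_num)]
          ring
      _ ≤ 1 / 2 := by norm_num
  have ht2 : t < 1 / 2 := lt_of_lt_of_le htε hεhalf
  -- the key constant identity
  set Bm : ℝ := ((Bz : ℤ) : ℝ) with hBmdef
  have hBmpos : 0 < Bm := by rw [hBmdef]; exact_mod_cast hBzpos
  have hBm_eq : Bm = 2 * (n : ℝ) * (W : ℝ) * (M : ℝ) ^ N *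
      ((N.choose m : ℕ) : ℝ) * 2 ^ (N - m) := by
    rw [hBmdef, hBzdef, hCzdef]
    push_cast
    ring
  have hpowNm : (2 : ℝ) ^ (N - m) * 2 ^ m = 2 ^ N := by
    rw [← pow_add, Nat.sub_add_cancel hmN]
  have hkey : 2 * Bm * ε = 1 := by
    rw [hε_eq, hBm_eq, ← mul_div_assoc, div_eq_one_iff_eq (by positivity), hDddef, ← hpowNm]
    ring
  -- evaluation
  have hx_eq : Polynomial.aeval x Δ = Polynomial.aeval t P := by
    rw [hPdef, Polynomial.aeval_comp]
    have : (Polynomial.aeval t) (1 - Polynomial.X : Polynomial ℤ) = x := by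
      simp [htdef]
    rw [this]
  rw [hx_eq]
  have heval : Polynomial.aeval t P = ∑ i ∈ range (D + 1), ((P.coeff i : ℤ) : ℝ) * t ^ i := by
    rw [Polynomial.aeval_eq_sum_range]
    exact Finset.sum_congr rfl fun i _ => by rw [zsmul_eq_mul]
  set tail : ℝ := ∑ i ∈ Finset.Ico (j + 1) (D + 1), ((P.coeff i : ℤ) : ℝ) * t ^ i with htaildef
  have hsplit : Polynomial.aeval t P = ((P.coeff j : ℤ) : ℝ) * t ^ j + tail := by
    rw [heval, range_eq_Ico,
      ← Finset.sum_Ico_consecutive _ (Nat.zero_le j) (by omega : j ≤ D + 1)]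
    have hlow : ∑ i ∈ Finset.Ico 0 j, ((P.coeff i : ℤ) : ℝ) * t ^ i = 0 := by
      apply Finset.sum_eq_zero
      intro i hi
      rw [Finset.mem_Ico] at hi
      rw [Polynomial.coeff_eq_zero_of_lt_natTrailingDegree (hjdef ▸ hi.2)]
      simp
    rw [hlow, zero_add, Finset.sum_eq_sum_Ico_succ_bot (by omega : j < D + 1)]
  -- tail bound
  have hgeom : ∀ K : ℕ, ∑ r ∈ range K, t ^ r ≤ 2 := by
    intro K
    have hS0 : (0 : ℝ) ≤ ∑ r ∈ range K, t ^ r :=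
      Finset.sum_nonneg fun r _ => pow_nonneg ht0.le r
    have hgm := geom_sum_mul t K
    have htK : (0 : ℝ) ≤ t ^ K := pow_nonneg ht0.le K
    nlinarith
  have htail : |tail| ≤ Bm * (2 * t ^ (j + 1)) := by
    calc |tail| ≤ ∑ i ∈ Finset.Ico (j + 1) (D + 1), |((P.coeff i : ℤ) : ℝ) * t ^ i| :=
          Finset.abs_sum_le_sum_abs _ _
      _ ≤ ∑ i ∈ Finset.Ico (j + 1) (D + 1), Bm * t ^ i := by
          refine Finset.sum_le_sum fun i hi => ?_
          rw [Finset.mem_Ico] at hi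
          rw [abs_mul, abs_pow, abs_of_pos ht0]
          apply mul_le_mul_of_nonneg_right _ (pow_nonneg ht0.le i)
          have hiN : i ≤ N := by omega
          have := hBd i hiN
          calc |((P.coeff i : ℤ) : ℝ)| = ((|P.coeff i| : ℤ) : ℝ) := by
                rw [Int.cast_abs]
            _ ≤ Bm := by rw [hBmdef]; exact_mod_cast this
      _ = Bm * ∑ i ∈ Finset.Ico (j + 1) (D + 1), t ^ i := by rw [Finset.mul_sum]
      _ ≤ Bm * (2 * t ^ (j + 1)) := by
          apply mul_le_mul_of_nonneg_left _ hBmpos.le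
          rw [Finset.sum_Ico_eq_sum_range]
          have hre : ∀ r ∈ range (D + 1 - (j + 1)), t ^ (j + 1 + r) = t ^ (j + 1) * t ^ r := by
            intro r _; rw [pow_add]
          rw [Finset.sum_congr rfl hre, ← Finset.mul_sum]
          rw [mul_comm (2 : ℝ) (t ^ (j + 1))]
          exact mul_le_mul_of_nonneg_left (hgeom _) (pow_nonneg ht0.le _)
  -- coefficient j bounded below
  have h1j : (1 : ℝ) ≤ |((P.coeff j : ℤ) : ℝ)| := by
    have := Int.one_le_abs hdj
    calc (1 : ℝ) = ((1 : ℤ) : ℝ) := by norm_num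
      _ ≤ ((|P.coeff j| : ℤ) : ℝ) := by exact_mod_cast this
      _ = |((P.coeff j : ℤ) : ℝ)| := by rw [Int.cast_abs]
  -- final estimate
  have htj : (0 : ℝ) < t ^ j := pow_pos ht0 j
  have hlead : t ^ j ≤ |((P.coeff j : ℤ) : ℝ) * t ^ j| := by
    rw [abs_mul, abs_pow, abs_of_pos ht0]
    nth_rewrite 1 [← one_mul (t ^ j)]
    exact mul_le_mul_of_nonneg_right h1j htj.le
  have htail' : |tail| < t ^ j := by
    have h2Bt : 2 * Bm * t < 1 := by
      calc 2 * Bm * t < 2 * Bm * ε := by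
            apply mul_lt_mul_of_pos_left htε (by positivity)
        _ = 1 := hkey
    calc |tail| ≤ Bm * (2 * t ^ (j + 1)) := htail
      _ = (2 * Bm * t) * t ^ j := by rw [pow_succ]; ring
      _ < 1 * t ^ j := by
          apply mul_lt_mul_of_pos_right h2Bt htj
      _ = t ^ j := one_mul _
  intro hzero
  rw [hsplit] at hzero
  have : ((P.coeff j : ℤ) : ℝ) * t ^ j = -tail := by linarith
  have habs : |((P.coeff j : ℤ) : ℝ) * t ^ j| = |tail| := by rw [this, abs_neg]
  linarith [hlead, htail', habs.le, habs.ge]
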